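/- Let $V \hookrightarrow H$ be Hilbert spaces with $a$ a continuous coercive symmetric bilinear form on $V$ generating a positive self-adjoint operator $\mathcal{A}$ on $H$. Let $w$ solve the abstract heat equation $\langle \partial_t w(t), \phi\rangle + a(\phi, w(t)) = 0$ for all $\phi \in V$, $t \in (0, s]$, with initial value $w(0) = w_0 \in H$. Then $\int_0^s \|\partial_t w(t)\|_H^2\, t\, dt \le \frac{1}{4}\|w_0\|_H^2$. -/

import Mathlib

open MeasureTheory intervalIntegral
open scoped InnerProductSpace

/-- Strong (weighted) stability estimate for the abstract heat equation:
if `⟨∂ₜ w, φ⟩ + a(φ, w) = 0` for all `φ ∈ V` on `(0, s]`, with `a` symmetric,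
continuous and coercive, then `∫_0^s ‖∂ₜ w(t)‖² t dt ≤ (1/4)‖w(0)‖²`. -/
theorem strong_stability_estimate
    {V H : Type*}
    [NormedAddCommGroup V] [InnerProductSpace ℝ V] [CompleteSpace V]
    [NormedAddCommGroup H] [InnerProductSpace ℝ H] [CompleteSpace H]
    (ι : V →ₗ[ℝ] H)
    (a : V →ₗ[ℝ] V →ₗ[ℝ] ℝ)
    (hsymm : ∀ u v, a u v = a v u)
    (β : ℝ) (hcont : ∀ u v, a u v ≤ β * ‖u‖ * ‖v‖)
    (α : ℝ) (hα : 0 < α) (hcoer : ∀ v, α * ‖v‖ ^ 2 ≤ a v v)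
    (s : ℝ) (hs : 0 < s)
    (w : ℝ → V) (dw : ℝ → H) (w₀ : H)
    (hw0 : ι (w 0) = w₀)
    (hderiv : ∀ t ∈ Set.Icc 0 s, HasDerivAt (fun r => ι (w r)) (dw t) t)
    (heq : ∀ t ∈ Set.Ioc 0 s, ∀ φ : V, ⟪dw t, ι φ⟫_ℝ + a φ (w t) = 0) :
    ∫ t in (0 : ℝ)..s, ‖dw t‖ ^ 2 * t ≤ (1 / 4) * ‖w₀‖ ^ 2 := by
  classical
  set u : ℝ → H := fun t => ι (w t) with hu_def
  set f : ℝ → ℝ := fun t => ‖dw t‖ ^ 2 * t with hf_def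
  have hw₀norm : ‖w₀‖ ^ 2 = ⟪u 0, u 0⟫_ℝ := by
    have h0 : u 0 = w₀ := by simpa [hu_def] using hw0
    rw [h0, real_inner_self_eq_norm_sq]
  by_cases hI : IntervalIntegrable f volume 0 s
  swap
  · rw [intervalIntegral.integral_undef hI]
    positivity
  -- basic pairing facts
  have hpair : ∀ t ∈ Set.Ioc (0:ℝ) s, ∀ φ : V, ⟪dw t, ι φ⟫_ℝ = - a φ (w t) := by
    intro t ht φ
    have := heq t ht φ
    linarith
  have husymm : ∀ t ∈ Set.Ioc (0:ℝ) s, ∀ τ ∈ Set.Ioc (0:ℝ) s,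
      ⟪dw t, u τ⟫_ℝ = ⟪dw τ, u t⟫_ℝ := by
    intro t ht τ hτ
    have h1 : ⟪dw t, ι (w τ)⟫_ℝ = - a (w τ) (w t) := hpair t ht (w τ)
    have h2 : ⟪dw τ, ι (w t)⟫_ℝ = - a (w t) (w τ) := hpair τ hτ (w t)
    have hu1 : u τ = ι (w τ) := rfl
    have hu2 : u t = ι (w t) := rfl
    rw [hu1, hu2, h1, h2, hsymm]
  set F : ℝ → ℝ := fun t => ⟪dw t, u t⟫_ℝ with hF_def
  set G : ℝ → ℝ := fun t => ⟪u t, u t⟫_ℝ with hG_def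
  have hFle : ∀ t ∈ Set.Ioc (0:ℝ) s, F t ≤ 0 := by
    intro t ht
    have h1 : F t = - a (w t) (w t) := hpair t ht (w t)
    have h2 : (0:ℝ) ≤ a (w t) (w t) :=
      le_trans (by positivity) (hcoer (w t))
    linarith
  have hGnonneg : ∀ t, 0 ≤ G t := fun t => real_inner_self_nonneg
  have hGd : ∀ t ∈ Set.Icc (0:ℝ) s, HasDerivAt G (2 * F t) t := by
    intro t ht
    have h := (hderiv t ht).inner ℝ (hderiv t ht)
    refine h.congr_deriv ?_
    show _ = 2 * ⟪dw t, u t⟫_ℝ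
    rw [real_inner_comm (u t) (dw t)]
    ring
  -- the function n(σ) = G(σ/2), and anti-diagonal invariance
  set n : ℝ → ℝ := fun σ => G (σ / 2) with hn_def
  have hC1 : ∀ t ∈ Set.Ioo (0:ℝ) s, ∀ τ ∈ Set.Ioo (0:ℝ) s,
      ⟪u t, u τ⟫_ℝ = n (t + τ) := by
    have key : ∀ t ∈ Set.Ioo (0:ℝ) s, ∀ τ ∈ Set.Ioo (0:ℝ) s, τ ≤ t →
        ⟪u t, u τ⟫_ℝ = n (t + τ) := by
      intro t ht τ hτ hle
      set m : ℝ := (t + τ) / 2 with hm_def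
      set r₀ : ℝ := (t - τ) / 2 with hr₀_def
      obtain ⟨ht1, ht2⟩ := ht
      obtain ⟨hτ1, hτ2⟩ := hτ
      have hr₀ : 0 ≤ r₀ := by rw [hr₀_def]; linarith
      set g : ℝ → ℝ := fun r => ⟪u (m + r), u (m - r)⟫_ℝ with hg_def
      have hgderiv : ∀ r ∈ Set.Icc (0:ℝ) r₀, HasDerivAt g 0 r := by
        intro r hr
        obtain ⟨hr1, hr2⟩ := hr
        rw [hr₀_def] at hr2
        have hm' : m = (t + τ) / 2 := hm_def
        have hmem1 : m + r ∈ Set.Ioo (0:ℝ) s := ⟨by linarith, by linarith⟩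
        have hmem2 : m - r ∈ Set.Ioo (0:ℝ) s := ⟨by linarith, by linarith⟩
        have h1 : HasDerivAt (fun r' : ℝ => u (m + r')) (dw (m + r)) r := by
          have hbase : HasDerivAt u (dw (m + r)) (m + r) :=
            hderiv _ ⟨hmem1.1.le, hmem1.2.le⟩
          have hin : HasDerivAt (fun r' : ℝ => m + r') 1 r := by
            simpa using (hasDerivAt_id r).const_add m
          have := hbase.scomp r hin
          simpa [Function.comp_def] using this
        have h2 : HasDerivAt (fun r' : ℝ => u (m - r')) (-dw (m - r)) r := by
          have hbase : HasDerivAt u (dw (m - r)) (m - r) :=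
            hderiv _ ⟨hmem2.1.le, hmem2.2.le⟩
          have hin : HasDerivAt (fun r' : ℝ => m - r') (-1) r := by
            simpa using (hasDerivAt_id r).const_sub m
          have := hbase.scomp r hin
          simpa [Function.comp_def] using this
        have h := h1.inner ℝ h2
        have hsym : ⟪u (m + r), dw (m - r)⟫_ℝ = ⟪dw (m + r), u (m - r)⟫_ℝ := by
          rw [real_inner_comm]
          exact husymm _ ⟨hmem2.1, hmem2.2.le⟩ _ ⟨hmem1.1, hmem1.2.le⟩
        have hz : (⟪u (m + r), -dw (m - r)⟫_ℝ + ⟪dw (m + r), u (m - r)⟫_ℝ) = 0 := by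
          rw [inner_neg_right, hsym]; ring
        rw [hz] at h
        exact h
      have hgcont : ContinuousOn g (Set.Icc 0 r₀) := fun r hr =>
        (hgderiv r hr).continuousAt.continuousWithinAt
      have hconst := constant_of_has_deriv_right_zero hgcont
        (fun r hr => (hgderiv r ⟨hr.1, hr.2.le⟩).hasDerivWithinAt) r₀
        ⟨hr₀, le_refl _⟩
      have e1 : m + r₀ = t := by rw [hm_def, hr₀_def]; ring
      have e2 : m - r₀ = τ := by rw [hm_def, hr₀_def]; ring
      calc ⟪u t, u τ⟫_ℝ = g r₀ := by simp only [hg_def]; rw [e1, e2]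
        _ = g 0 := hconst
        _ = n (t + τ) := by
            simp [hg_def, hn_def, hG_def, hm_def]
    intro t ht τ hτ
    rcases le_total τ t with hle | hle
    · exact key t ht τ hτ hle
    · rw [real_inner_comm, add_comm]
      exact key τ hτ t ht hle
  -- derivative of n
  have hL2 : ∀ τ ∈ Set.Ioo (0:ℝ) s, ∀ σ : ℝ, σ - τ ∈ Set.Ioo (0:ℝ) s →
      HasDerivAt n ⟪dw (σ - τ), u τ⟫_ℝ σ := by
    intro τ hτ σ hστ
    have hopen : IsOpen {σ' : ℝ | σ' - τ ∈ Set.Ioo (0:ℝ) s} :=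
      IsOpen.preimage (continuous_id.sub continuous_const) isOpen_Ioo
    have hev : (fun σ' => ⟪u (σ' - τ), u τ⟫_ℝ) =ᶠ[nhds σ] n := by
      filter_upwards [hopen.mem_nhds hστ] with σ' hσ'
      have h := hC1 (σ' - τ) hσ' τ hτ
      have e : σ' - τ + τ = σ' := by ring
      rw [e] at h
      exact h
    have hd : HasDerivAt (fun σ' => ⟪u (σ' - τ), u τ⟫_ℝ) ⟪dw (σ - τ), u τ⟫_ℝ σ := by
      have hbase : HasDerivAt u (dw (σ - τ)) (σ - τ) :=
        hderiv _ ⟨hστ.1.le, hστ.2.le⟩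
      have hin : HasDerivAt (fun σ' : ℝ => σ' - τ) 1 σ := by
        simpa using (hasDerivAt_id σ).sub_const τ
      have h1 : HasDerivAt (fun σ' => u (σ' - τ)) (dw (σ - τ)) σ := by
        have := hbase.scomp σ hin
        simpa [Function.comp_def] using this
      have h := h1.inner ℝ (hasDerivAt_const σ (u τ))
      simpa using h
    exact hd.congr_of_eventuallyEq hev.symm
  -- F' = 2‖dw‖² on (0,s)
  have hL3 : ∀ t ∈ Set.Ioo (0:ℝ) s, HasDerivAt F (2 * ‖dw t‖ ^ 2) t := by
    intro t ht
    have hopen : IsOpen {t' : ℝ | t' ∈ Set.Ioo (0:ℝ) s ∧ 2 * t' - t ∈ Set.Ioo (0:ℝ) s} :=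
      IsOpen.inter isOpen_Ioo
        (IsOpen.preimage ((continuous_const.mul continuous_id).sub continuous_const) isOpen_Ioo)
    have hmem : t ∈ {t' : ℝ | t' ∈ Set.Ioo (0:ℝ) s ∧ 2 * t' - t ∈ Set.Ioo (0:ℝ) s} := by
      refine ⟨ht, ?_⟩
      show 2 * t - t ∈ Set.Ioo (0:ℝ) s
      rw [show 2 * t - t = t by ring]
      exact ht
    have hev : (fun t' => ⟪dw t, u (2 * t' - t)⟫_ℝ) =ᶠ[nhds t] F := by
      filter_upwards [hopen.mem_nhds hmem] with t' ht'
      obtain ⟨ht'1, ht'2⟩ := ht'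
      have e : 2 * t' - t' = t' := by ring
      have h1 : HasDerivAt n ⟪dw t', u t'⟫_ℝ (2 * t') := by
        have := hL2 t' ht'1 (2 * t') (by rw [e]; exact ht'1)
        rwa [e] at this
      have h2 : HasDerivAt n ⟪dw (2 * t' - t), u t⟫_ℝ (2 * t') :=
        hL2 t ht (2 * t') ht'2
      calc ⟪dw t, u (2 * t' - t)⟫_ℝ
          = ⟪dw (2 * t' - t), u t⟫_ℝ :=
            (husymm _ ⟨ht'2.1, ht'2.2.le⟩ t ⟨ht.1, ht.2.le⟩).symm
        _ = ⟪dw t', u t'⟫_ℝ := (h1.unique h2).symm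
        _ = F t' := rfl
    have hd : HasDerivAt (fun t' => ⟪dw t, u (2 * t' - t)⟫_ℝ) (2 * ‖dw t‖ ^ 2) t := by
      have hbase : HasDerivAt u (dw t) (2 * t - t) := by
        rw [show 2 * t - t = t by ring]
        exact hderiv t ⟨ht.1.le, ht.2.le⟩
      have hin : HasDerivAt (fun t' : ℝ => 2 * t' - t) 2 t := by
        simpa using ((hasDerivAt_id t).const_mul 2).sub_const t
      have h1 : HasDerivAt (fun t' => u (2 * t' - t)) ((2:ℝ) • dw t) t := by
        have h := HasDerivAt.scomp (g₁ := u) (h := fun t' : ℝ => 2 * t' - t)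
          (x := t) (g₁' := dw t) (h' := 2) hbase hin
        simpa [Function.comp_def] using h
      have h := (hasDerivAt_const t (dw t)).inner ℝ h1
      have hz : ⟪dw t, (2:ℝ) • dw t⟫_ℝ + ⟪(0:H), u (2 * t - t)⟫_ℝ = 2 * ‖dw t‖ ^ 2 := by
        rw [inner_zero_left, real_inner_smul_right, real_inner_self_eq_norm_sq]
        ring
      rw [hz] at h
      exact h
    exact hd.congr_of_eventuallyEq hev.symm
  -- F is monotone on (0, s)
  have hFmono : MonotoneOn F (Set.Ioo (0:ℝ) s) := by
    apply monotoneOn_of_deriv_nonneg (convex_Ioo 0 s)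
    · exact fun x hx => ((hL3 x hx).continuousAt).continuousWithinAt
    · intro x hx
      rw [interior_Ioo] at hx
      exact ((hL3 x hx).differentiableAt).differentiableWithinAt
    · intro x hx
      rw [interior_Ioo] at hx
      rw [(hL3 x hx).deriv]
      positivity
  -- the key inequality on [ε, s']
  have key : ∀ ε : ℝ, 0 < ε → ∀ s' : ℝ, ε < s' → s' < s →
      (∫ t in ε..s', f t) ≤ (G (ε/2) - G ε / 2) / 2 := by
    intro ε hε s' hεs' hs's
    have hsub : Set.uIcc ε s' ⊆ Set.Ioo (0:ℝ) s := by
      rw [Set.uIcc_of_le hεs'.le]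
      intro x hx
      exact ⟨lt_of_lt_of_le hε hx.1, lt_of_le_of_lt hx.2 hs's⟩
    have hφd : ∀ t ∈ Set.uIcc ε s', HasDerivAt (fun t => t * F t - G t / 2)
        (2 * f t) t := by
      intro t ht
      have ht' := hsub ht
      have h1 : HasDerivAt (fun t => t * F t) (1 * F t + t * (2 * ‖dw t‖ ^ 2)) t :=
        (hasDerivAt_id t).mul (hL3 t ht')
      have h2 : HasDerivAt (fun t => G t / 2) (2 * F t / 2) t :=
        (hGd t ⟨ht'.1.le, ht'.2.le⟩).div_const 2
      have h := h1.sub h2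
      refine h.congr_deriv ?_
      show _ = 2 * (‖dw t‖ ^ 2 * t)
      ring
    have hint2 : IntervalIntegrable (fun t => 2 * f t) volume ε s' := by
      apply IntervalIntegrable.const_mul
      apply hI.mono_set
      rw [Set.uIcc_of_le hεs'.le, Set.uIcc_of_le hs.le]
      exact fun x hx => ⟨le_trans hε.le hx.1, le_trans hx.2 hs's.le⟩
    have hFTC1 : (∫ t in ε..s', 2 * f t)
        = (s' * F s' - G s' / 2) - (ε * F ε - G ε / 2) :=
      intervalIntegral.integral_eq_sub_of_hasDerivAt hφd hint2
    -- FTC for G on [ε/2, ε]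
    have hsub2 : Set.uIcc (ε/2) ε ⊆ Set.Ioo (0:ℝ) s := by
      rw [Set.uIcc_of_le (by linarith)]
      intro x hx
      exact ⟨lt_of_lt_of_le (by linarith) hx.1, lt_of_le_of_lt hx.2 (by linarith)⟩
    have hFc : ContinuousOn (fun t => 2 * F t) (Set.uIcc (ε/2) ε) := by
      apply ContinuousOn.mul continuousOn_const
      exact fun x hx => ((hL3 x (hsub2 hx)).continuousAt).continuousWithinAt
    have hFTC2 : (∫ t in (ε/2)..ε, 2 * F t) = G ε - G (ε/2) := by
      apply intervalIntegral.integral_eq_sub_of_hasDerivAt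
      · intro t ht
        have ht' := hsub2 ht
        exact hGd t ⟨ht'.1.le, ht'.2.le⟩
      · exact hFc.intervalIntegrable
    have hmono_bound : (∫ t in (ε/2)..ε, 2 * F t) ≤ (∫ t in (ε/2)..ε, 2 * F ε) := by
      apply intervalIntegral.integral_mono_on (by linarith) hFc.intervalIntegrable
        intervalIntegrable_const
      intro x hx
      have hx1 : x ∈ Set.Ioo (0:ℝ) s :=
        hsub2 (by rw [Set.uIcc_of_le (by linarith : ε/2 ≤ ε)]; exact hx)
      have hεIoo : ε ∈ Set.Ioo (0:ℝ) s := ⟨hε, by linarith⟩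
      have := hFmono hx1 hεIoo hx.2
      linarith
    have hconstint : (∫ t in (ε/2)..ε, (2:ℝ) * F ε) = ε * F ε := by
      rw [intervalIntegral.integral_const, smul_eq_mul]
      ring
    have hGbound : G ε - G (ε/2) ≤ ε * F ε := by
      calc G ε - G (ε/2) = ∫ t in (ε/2)..ε, 2 * F t := hFTC2.symm
        _ ≤ ∫ t in (ε/2)..ε, (2:ℝ) * F ε := hmono_bound
        _ = ε * F ε := hconstint
    have hφs' : s' * F s' - G s' / 2 ≤ 0 := by
      have h1 : F s' ≤ 0 := hFle s' ⟨by linarith, hs's.le⟩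
      have h2 : 0 ≤ G s' := hGnonneg s'
      nlinarith
    have h2f : (∫ t in ε..s', (2:ℝ) * f t) = 2 * ∫ t in ε..s', f t :=
      intervalIntegral.integral_const_mul 2 f
    have hmain : 2 * (∫ t in ε..s', f t) ≤ G (ε/2) - G ε / 2 := by
      rw [← h2f, hFTC1]
      linarith
    linarith
  -- assemble via limits
  set P : ℝ → ℝ := fun x => ∫ t in (0:ℝ)..x, f t with hP_def
  have huIcc : Set.uIcc (0:ℝ) s = Set.Icc 0 s := Set.uIcc_of_le hs.le
  have hPcont : ContinuousOn P (Set.Icc 0 s) := by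
    have := intervalIntegral.continuousOn_primitive_interval' hI
      (Set.left_mem_uIcc (a := (0:ℝ)) (b := s))
    rwa [huIcc] at this
  have hG0 : G 0 = ⟪u 0, u 0⟫_ℝ := rfl
  have hGc : ContinuousAt G 0 := (hGd 0 ⟨le_refl 0, hs.le⟩).continuousAt
  have hstep1 : ∀ s' ∈ Set.Ioo (0:ℝ) s, P s' ≤ G 0 / 4 := by
    intro s' hs'
    have htendP : Filter.Tendsto P (nhdsWithin 0 (Set.Ioi 0)) (nhds (P 0)) := by
      have h0 : ContinuousWithinAt P (Set.Icc 0 s) 0 :=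
        hPcont 0 ⟨le_refl 0, hs.le⟩
      exact h0.tendsto.mono_left (nhdsWithin_le_iff.mpr
        (Filter.mem_of_superset (Ioc_mem_nhdsGT_of_mem ⟨le_refl 0, hs⟩)
          Set.Ioc_subset_Icc_self))
    have hP0 : P 0 = 0 := intervalIntegral.integral_same
    have htendG1 : Filter.Tendsto (fun ε : ℝ => G (ε/2))
        (nhdsWithin 0 (Set.Ioi 0)) (nhds (G 0)) := by
      have hhalf : Filter.Tendsto (fun ε : ℝ => ε / 2) (nhds 0) (nhds 0) := by
        simpa using (continuous_id.div_const (2:ℝ)).tendsto 0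
      exact (hGc.tendsto.comp hhalf).mono_left nhdsWithin_le_nhds
    have htendG2 : Filter.Tendsto G (nhdsWithin 0 (Set.Ioi 0)) (nhds (G 0)) :=
      hGc.tendsto.mono_left nhdsWithin_le_nhds
    have htend : Filter.Tendsto (fun ε : ℝ => P ε + (G (ε/2) - G ε / 2) / 2)
        (nhdsWithin 0 (Set.Ioi 0)) (nhds (P 0 + (G 0 - G 0 / 2) / 2)) :=
      htendP.add ((htendG1.sub (htendG2.div_const 2)).div_const 2)
    have hev : ∀ᶠ ε in nhdsWithin 0 (Set.Ioi 0),
        P s' ≤ P ε + (G (ε/2) - G ε / 2) / 2 := by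
      filter_upwards [Ioo_mem_nhdsGT_of_mem
        (show (0:ℝ) ∈ Set.Ico 0 s' from ⟨le_refl 0, hs'.1⟩)] with ε hε
      have h1 : IntervalIntegrable f volume 0 ε := hI.mono_set (by
        rw [Set.uIcc_of_le hε.1.le, Set.uIcc_of_le hs.le]
        exact Set.Icc_subset_Icc (le_refl 0) (by linarith [hs'.2, hε.2]))
      have h2 : IntervalIntegrable f volume ε s' := hI.mono_set (by
        rw [Set.uIcc_of_le hε.2.le, Set.uIcc_of_le hs.le]
        exact Set.Icc_subset_Icc hε.1.le hs'.2.le)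
      have hadd : P ε + (∫ t in ε..s', f t) = P s' :=
        intervalIntegral.integral_add_adjacent_intervals h1 h2
      have := key ε hε.1 s' hε.2 hs'.2
      linarith
    have hle := ge_of_tendsto htend hev
    rw [hP0] at hle
    linarith
  have htendPs : Filter.Tendsto P (nhdsWithin s (Set.Iio s)) (nhds (P s)) := by
    have h0 : ContinuousWithinAt P (Set.Icc 0 s) s :=
      hPcont s ⟨hs.le, le_refl s⟩
    exact h0.tendsto.mono_left (nhdsWithin_le_iff.mpr
      (Filter.mem_of_superset (Icc_mem_nhdsLT_of_mem ⟨hs, le_refl s⟩)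
        (by exact fun x hx => hx)))
  have hevs : ∀ᶠ s' in nhdsWithin s (Set.Iio s), P s' ≤ G 0 / 4 := by
    filter_upwards [Ioo_mem_nhdsLT_of_mem
      (show s ∈ Set.Ioc 0 s from ⟨hs, le_refl s⟩)] with s' hs'
    exact hstep1 s' hs'
  have hfinal : P s ≤ G 0 / 4 := le_of_tendsto htendPs hevs
  have hPs : P s = ∫ t in (0:ℝ)..s, f t := rfl
  rw [hw₀norm, ← hG0]
  rw [← hPs]
  linarith
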